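/- arXiv:math/0506007 — 3 statements merged into one kernel-verified Lean document; each statement's English description precedes it below -/
import Mathlib

section
/- For a finite group G with normal subgroup N, the worst-case Cayley diameter satisfies diam_max(G) ≤ 2·diam_max(G/N)·diam_max(N) + diam_max(N) + diam_max(G/N), where diam_max(H) is the maximum over all generating sets X of H of the diameter of the undirected Cayley graph Cay(H,X). -/
/-- `g` is a product of at most `k` elements of `X ∪ X⁻¹`. -/
def IsWordLenLE {G : Type*} [Group G] (X : Set G) (k : ℕ) (g : G) : Prop :=
  ∃ l : List G, (∀ x ∈ l, x ∈ X ∨ x⁻¹ ∈ X) ∧ l.length ≤ k ∧ l.prod = g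

/-- The diameter of the (undirected) Cayley graph of `G` with respect to `X`:
the least `k` such that every element of `G` is a product of at most `k`
elements of `X ∪ X⁻¹`. -/
noncomputable def cayleyDiam (G : Type*) [Group G] (X : Set G) : ℕ :=
  sInf {k | ∀ g : G, IsWordLenLE X k g}

/-- The worst diameter of `G`: the maximum of the Cayley diameters over all
generating sets of `G`. -/
noncomputable def diamMax (G : Type*) [Group G] : ℕ :=
  sSup {d | ∃ X : Set G, Subgroup.closure X = ⊤ ∧ d = cayleyDiam G X}

section Aux
variable {G : Type*} [Group G]

theorem IsWordLenLE.mono {X : Set G} {k k' : ℕ} {g : G} (h : IsWordLenLE X k g)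
    (hk : k ≤ k') : IsWordLenLE X k' g := by
  obtain ⟨l, h1, h2, h3⟩ := h
  exact ⟨l, h1, h2.trans hk, h3⟩

theorem IsWordLenLE.mul {X : Set G} {k m : ℕ} {g h : G} (hg : IsWordLenLE X k g)
    (hh : IsWordLenLE X m h) : IsWordLenLE X (k + m) (g * h) := by
  obtain ⟨l1, a1, b1, c1⟩ := hg
  obtain ⟨l2, a2, b2, c2⟩ := hh
  refine ⟨l1 ++ l2, ?_, ?_, ?_⟩
  · intro x hx
    rcases List.mem_append.1 hx with hx | hx
    · exact a1 x hx
    · exact a2 x hx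
  · simpa using Nat.add_le_add b1 b2
  · simp [c1, c2]

theorem IsWordLenLE.inv {X : Set G} {k : ℕ} {g : G} (hg : IsWordLenLE X k g) :
    IsWordLenLE X k g⁻¹ := by
  obtain ⟨l, a, b, c⟩ := hg
  refine ⟨(l.map (·⁻¹)).reverse, ?_, by simpa using b, by rw [← List.prod_inv_reverse, c]⟩
  intro x hx
  simp only [List.mem_reverse, List.mem_map] at hx
  obtain ⟨y, hy, rfl⟩ := hx
  rcases a y hy with h | h
  · exact Or.inr (by simpa using h)
  · exact Or.inl h

theorem IsWordLenLE.single {X : Set G} {x : G} (hx : x ∈ X ∨ x⁻¹ ∈ X) :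
    IsWordLenLE X 1 x := ⟨[x], by simpa using hx, by simp, by simp⟩

theorem isWordLenLE_list_prod {X : Set G} {c : ℕ} :
    ∀ l : List G, (∀ x ∈ l, IsWordLenLE X c x) → IsWordLenLE X (l.length * c) l.prod := by
  intro l
  induction l with
  | nil => intro _; exact ⟨[], by simp, by simp, by simp⟩
  | cons x t ih =>
    intro h
    have hx := h x List.mem_cons_self
    have ht := ih fun y hy => h y (List.mem_cons_of_mem _ hy)
    have := hx.mul ht
    simpa [List.length_cons, Nat.succ_mul, Nat.add_comm] using this

theorem cayleyDiam_spec {H : Type*} [Group H] [Finite H] {X : Set H}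
    (hX : Subgroup.closure X = ⊤) (g : H) : IsWordLenLE X (cayleyDiam H X) g := by
  have hword : ∀ g : H, ∃ l : List H, (∀ x ∈ l, x ∈ X ∨ x⁻¹ ∈ X) ∧ l.prod = g := by
    intro g
    have hg : g ∈ Submonoid.closure (X ∪ X⁻¹) := by
      rw [← Subgroup.closure_toSubmonoid]
      rw [hX]; trivial
    obtain ⟨l, h1, h2⟩ := Submonoid.exists_list_of_mem_closure hg
    refine ⟨l, ?_, h2⟩
    intro x hx
    rcases h1 x hx with h | h
    · exact Or.inl h
    · exact Or.inr h
  have hne : {k | ∀ g : H, IsWordLenLE X k g}.Nonempty := by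
    choose f hf1 hf2 using hword
    haveI : Fintype H := Fintype.ofFinite H
    exact ⟨Finset.univ.sup fun g => (f g).length,
      fun g => ⟨f g, hf1 g, Finset.le_sup (f := fun g => (f g).length) (Finset.mem_univ g), hf2 g⟩⟩
  exact Nat.sInf_mem hne g

theorem cayleyDiam_le_diamMax {H : Type*} [Group H] [Finite H] {X : Set H}
    (hX : Subgroup.closure X = ⊤) : cayleyDiam H X ≤ diamMax H := by
  have hfin : Finite (Set H) := inferInstance
  have hsub : {d | ∃ X : Set H, Subgroup.closure X = ⊤ ∧ d = cayleyDiam H X} ⊆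
      Set.range (cayleyDiam H) := by
    rintro d ⟨Y, _, rfl⟩; exact ⟨Y, rfl⟩
  exact le_csSup (((Set.finite_range _).subset hsub).bddAbove) ⟨X, hX, rfl⟩

end Aux

theorem diamMax_le_of_normal (G : Type*) [Group G] [Fintype G]
    (N : Subgroup G) [N.Normal] :
    diamMax G ≤ 2 * diamMax (G ⧸ N) * diamMax N + diamMax N + diamMax (G ⧸ N) := by
  set DQ := diamMax (G ⧸ N)
  set DN := diamMax N
  apply csSup_le'
  rintro d ⟨X, hX, rfl⟩
  -- the quotient map and the image generating set
  set π : G →* G ⧸ N := QuotientGroup.mk' N with hπ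
  have hπsurj : Function.Surjective π := QuotientGroup.mk'_surjective N
  have hXQ : Subgroup.closure (π '' X) = ⊤ := by
    rw [← MonoidHom.map_closure, hX, Subgroup.map_top_of_surjective _ hπsurj]
  set dQ := cayleyDiam (G ⧸ N) (π '' X) with hdQ
  have hdQle : dQ ≤ DQ := cayleyDiam_le_diamMax hXQ
  -- lifting words from the quotient
  have hlift : ∀ l : List (G ⧸ N), (∀ y ∈ l, y ∈ π '' X ∨ y⁻¹ ∈ π '' X) →
      ∃ w : List G, (∀ x ∈ w, x ∈ X ∨ x⁻¹ ∈ X) ∧ w.length = l.length ∧ π w.prod = l.prod := by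
    intro l
    induction l with
    | nil => intro _; exact ⟨[], by simp, by simp, by simp⟩
    | cons y t ih =>
      intro h
      obtain ⟨w, hw1, hw2, hw3⟩ := ih fun z hz => h z (List.mem_cons_of_mem _ hz)
      rcases h y List.mem_cons_self with ⟨x, hx, hxy⟩ | ⟨x, hx, hxy⟩
      · refine ⟨x :: w, ?_, by simp [hw2], by simp [hxy, hw3]⟩
        intro z hz
        rcases List.mem_cons.1 hz with rfl | hz
        exacts [Or.inl hx, hw1 z hz]
      · refine ⟨x⁻¹ :: w, ?_, by simp [hw2], ?_⟩
        · intro z hz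
          rcases List.mem_cons.1 hz with rfl | hz
          exacts [Or.inr (by simpa using hx), hw1 z hz]
        have : π x⁻¹ = y := by rw [map_inv, hxy, inv_inv]
        simp [this, hw3]
  -- short representatives of quotient classes
  have hshort : ∀ g : G, ∃ s : G, IsWordLenLE X dQ s ∧ π s = π g := by
    intro g
    obtain ⟨l, h1, h2, h3⟩ := cayleyDiam_spec hXQ (π g)
    obtain ⟨w, hw1, hw2, hw3⟩ := hlift l h1
    exact ⟨w.prod, ⟨w, hw1, hw2 ▸ h2, rfl⟩, hw3.trans h3⟩
  -- the generating set of N inside G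
  have hker : ∀ s : G, π s = 1 → s ∈ N := by
    intro s h
    have : s ∈ π.ker := MonoidHom.mem_ker.2 h
    rwa [hπ, QuotientGroup.ker_mk'] at this
  have hker' : ∀ s : G, s ∈ N → π s = 1 := by
    intro s h
    have : s ∈ π.ker := by rw [hπ, QuotientGroup.ker_mk']; exact h
    exact MonoidHom.mem_ker.1 this
  set Y' : Set G := {g : G | g ∈ N ∧ IsWordLenLE X (2 * dQ + 1) g} with hY'
  set M : Subgroup G := Subgroup.closure Y' with hM
  -- Schreier induction
  have hkey : ∀ l : List G, (∀ x ∈ l, x ∈ X ∨ x⁻¹ ∈ X) → ∀ s : G,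
      IsWordLenLE X dQ s → π s = π l.prod → l.prod * s⁻¹ ∈ M := by
    intro l
    induction l using List.reverseRecOn with
    | nil =>
      intro _ s hs hπs
      have hsN : s ∈ N := hker s (by simpa using hπs)
      have : s ∈ Y' := ⟨hsN, hs.mono (by omega)⟩
      have hsM : s ∈ M := Subgroup.subset_closure this
      simpa using M.inv_mem hsM
    | append_singleton t x ih =>
      intro h s hs hπs
      obtain ⟨st, hst, hπst⟩ := hshort t.prod
      have hIH : t.prod * st⁻¹ ∈ M := ih (fun z hz => h z (by simp [hz])) st hst hπst
      have hx : x ∈ X ∨ x⁻¹ ∈ X := h x (by simp)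
      have hfac : st * x * s⁻¹ ∈ Y' := by
        constructor
        · refine hker _ ?_
          rw [map_mul, map_mul, map_inv, hπst, hπs]
          simp [mul_assoc]
        · have := (hst.mul (IsWordLenLE.single hx)).mul hs.inv
          exact this.mono (by omega)
      have hfacM : st * x * s⁻¹ ∈ M := Subgroup.subset_closure hfac
      have : (t ++ [x]).prod * s⁻¹ = (t.prod * st⁻¹) * (st * x * s⁻¹) := by
        simp [List.prod_append]
        group
      rw [this]
      exact M.mul_mem hIH hfacM
  -- every element of N lies in M
  have hNM : ∀ n : G, n ∈ N → n ∈ M := by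
    intro n hn
    obtain ⟨l, h1, h2, h3⟩ := cayleyDiam_spec (X := X) hX n
    obtain ⟨s, hs, hπs⟩ := hshort n
    have hsN : s ∈ N := hker s (by rw [hπs]; exact hker' n hn)
    have h1' : n * s⁻¹ ∈ M := by
      have := hkey l h1 s hs (by rw [hπs, h3])
      rwa [h3] at this
    have h2' : s ∈ M := Subgroup.subset_closure ⟨hsN, hs.mono (by omega)⟩
    have : n = (n * s⁻¹) * s := by group
    rw [this]
    exact M.mul_mem h1' h2'
  -- the generating set of N as a subgroup
  set Y : Set N := {n : N | IsWordLenLE X (2 * dQ + 1) (n : G)} with hY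
  have hMN : M ≤ N := (Subgroup.closure_le N).2 fun g hg => hg.1
  have hYgen : Subgroup.closure Y = ⊤ := by
    rw [eq_top_iff]
    rintro ⟨n, hn⟩ -
    have hnM : n ∈ M := hNM n hn
    have key : ∀ g, ∀ _ : g ∈ M, ∀ hg : g ∈ N, (⟨g, hg⟩ : N) ∈ Subgroup.closure Y := by
      intro g hgM
      induction hgM using Subgroup.closure_induction with
      | mem x hx => exact fun hxN => Subgroup.subset_closure hx.2
      | one =>
        intro h1
        have : (⟨1, h1⟩ : N) = 1 := rfl
        rw [this]; exact Subgroup.one_mem _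
      | mul x y hx hy ihx ihy =>
        intro hxy
        have hxN : x ∈ N := hMN hx
        have hyN : y ∈ N := hMN hy
        have : (⟨x * y, hxy⟩ : N) = ⟨x, hxN⟩ * ⟨y, hyN⟩ := rfl
        rw [this]
        exact Subgroup.mul_mem _ (ihx hxN) (ihy hyN)
      | inv x hx ihx =>
        intro hxi
        have hxN : x ∈ N := hMN hx
        have : (⟨x⁻¹, hxi⟩ : N) = (⟨x, hxN⟩ : N)⁻¹ := rfl
        rw [this]
        exact Subgroup.inv_mem _ (ihx hxN)
    exact key n hnM hn
  set dN := cayleyDiam N Y with hdN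
  have hdNle : dN ≤ DN := cayleyDiam_le_diamMax hYgen
  -- final bound for an arbitrary element
  have hfinal : ∀ g : G, IsWordLenLE X (dN * (2 * dQ + 1) + dQ) g := by
    intro g
    obtain ⟨s, hs, hπs⟩ := hshort g
    have hgs : g * s⁻¹ ∈ N := by
      refine hker _ ?_
      rw [map_mul, map_inv, hπs]
      simp
    obtain ⟨l, h1, h2, h3⟩ := cayleyDiam_spec hYgen (⟨g * s⁻¹, hgs⟩ : N)
    have hprod : (l.map (N.subtype)).prod = g * s⁻¹ := by
      rw [← map_list_prod, h3]; rfl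
    have hmem : ∀ x ∈ l.map (N.subtype), IsWordLenLE X (2 * dQ + 1) x := by
      intro x hx
      simp only [List.mem_map] at hx
      obtain ⟨y, hy, rfl⟩ := hx
      rcases h1 y hy with h | h
      · exact h
      · have : IsWordLenLE X (2 * dQ + 1) ((y⁻¹ : N) : G) := h
        simpa using this.inv
    have := (isWordLenLE_list_prod _ hmem).mono
      (Nat.mul_le_mul_right _ (by simpa using h2))
    rw [hprod] at this
    have := this.mul hs
    have heq : g * s⁻¹ * s = g := by group
    rwa [heq] at this
  have hbound : cayleyDiam G X ≤ dN * (2 * dQ + 1) + dQ := Nat.sInf_le hfinal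
  refine hbound.trans ?_
  calc dN * (2 * dQ + 1) + dQ ≤ DN * (2 * DQ + 1) + DQ := by
        have : (2 * dQ + 1) ≤ (2 * DQ + 1) := by omega
        exact Nat.add_le_add (Nat.mul_le_mul hdNle this) hdQle
    _ = 2 * DQ * DN + DN + DQ := by ring
end

section
/- Let p be an odd prime, W = C₂ ≀ C_p, and G = W/Z(W). Then the automorphism group of G acts transitively on the complement G \ V of the image V of the base group. -/
/-- The base group of the wreath product `C₂ ≀ C_p`, written multiplicatively. -/
abbrev WreathBase (p : ℕ) := Multiplicative (ZMod p → ZMod 2)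

/-- The shift automorphism of the base group, by `k`. -/
def shiftAddAut (p : ℕ) (k : ZMod p) : AddAut (ZMod p → ZMod 2) where
  toFun f i := f (i + k)
  invFun f i := f (i - k)
  left_inv f := by funext i; simp
  right_inv f := by funext i; simp
  map_add' f g := rfl

/-- The action of `C_p` on the base group by cyclic shifts. -/
def wreathShift (p : ℕ) : Multiplicative (ZMod p) →* MulAut (WreathBase p) where
  toFun k := AddEquiv.toMultiplicative (shiftAddAut p k.toAdd)
  map_one' := by
    ext f
    simp [shiftAddAut, AddEquiv.toMultiplicative]
  map_mul' a b := by
    ext f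
    simp only [shiftAddAut, AddEquiv.toMultiplicative]
    exact congrArg (fun z => Multiplicative.toAdd f z) (add_assoc ..).symm

/-- The wreath product `C₂ ≀ C_p`. -/
abbrev Wreath (p : ℕ) := WreathBase p ⋊[wreathShift p] Multiplicative (ZMod p)

/-- The quotient `G = W / Z(W)` of the wreath product by its center. -/
abbrev WreathQuot (p : ℕ) := Wreath p ⧸ Subgroup.center (Wreath p)

/-- The canonical generator `c`, the image in `G` of the generator of `C_p`. -/
def cElem (p : ℕ) : WreathQuot p :=
  QuotientGroup.mk' _ (SemidirectProduct.inr (Multiplicative.ofAdd (1 : ZMod p)))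

/-- `V`, the image in `G` of the base group `C₂^p`. -/
def Vsub (p : ℕ) : Subgroup (WreathQuot p) :=
  Subgroup.map (QuotientGroup.mk' _) (SemidirectProduct.inl (φ := wreathShift p)).range
open Multiplicative SemidirectProduct QuotientGroup

/-- The rescaling automorphism of `W`. -/
def scaleEquiv (p : ℕ) (a b : ZMod p) (hab : a * b = 1) : Wreath p ≃* Wreath p where
  toFun x := ⟨ofAdd fun i => x.left.toAdd (i * b), ofAdd (a * x.right.toAdd)⟩
  invFun x := ⟨ofAdd fun i => x.left.toAdd (i * a), ofAdd (b * x.right.toAdd)⟩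
  left_inv x := by
    have hba : b * a = 1 := by rwa [mul_comm]
    refine SemidirectProduct.ext ?_ ?_
    · show ofAdd (fun i => x.left.toAdd (i * a * b)) = x.left
      have : (fun i => x.left.toAdd (i * a * b)) = x.left.toAdd := by
        funext i; rw [mul_assoc, hab, mul_one]
      rw [this]; exact ofAdd_toAdd _
    · show ofAdd (b * (a * x.right.toAdd)) = x.right
      rw [← mul_assoc, hba, one_mul]; exact ofAdd_toAdd _
  right_inv x := by
    have hba : b * a = 1 := by rwa [mul_comm]
    refine SemidirectProduct.ext ?_ ?_
    · show ofAdd (fun i => x.left.toAdd (i * b * a)) = x.left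
      have : (fun i => x.left.toAdd (i * b * a)) = x.left.toAdd := by
        funext i; rw [mul_assoc, hba, mul_one]
      rw [this]; exact ofAdd_toAdd _
    · show ofAdd (a * (b * x.right.toAdd)) = x.right
      rw [← mul_assoc, hab, one_mul]; exact ofAdd_toAdd _
  map_mul' x y := by
    refine SemidirectProduct.ext ?_ ?_
    · show ofAdd (fun i => (x.left * wreathShift p x.right y.left).toAdd (i * b)) = _
      refine Multiplicative.toAdd.injective ?_
      funext i
      show (x.left * wreathShift p x.right y.left).toAdd (i * b)
          = x.left.toAdd (i * b) + y.left.toAdd ((i + a * x.right.toAdd) * b)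
      have : (i + a * x.right.toAdd) * b = i * b + x.right.toAdd := by
        rw [add_mul]
        congr 1
        rw [mul_comm a, mul_assoc, hab, mul_one]
      rw [this]
      rfl
    · show ofAdd (a * (x.right.toAdd + y.right.toAdd)) = _
      rw [mul_add]
      rfl

/-- Any automorphism of `W` descends to `G = W/Z(W)`. -/
def quotAut (p : ℕ) (e : Wreath p ≃* Wreath p) : MulAut (WreathQuot p) :=
  QuotientGroup.congr _ _ e (Subgroup.characteristic_iff_map_eq.mp inferInstance e)

lemma quotAut_mk (p : ℕ) (e : Wreath p ≃* Wreath p) (x : Wreath p) :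
    quotAut p e (QuotientGroup.mk x) = QuotientGroup.mk (e x) := rfl

lemma sum_range_cast (p : ℕ) [NeZero p] (f : ZMod p → ZMod 2) :
    ∑ l ∈ Finset.range p, f (l : ZMod p) = ∑ x : ZMod p, f x := by
  refine Finset.sum_nbij' (fun l => (l : ZMod p)) (fun x => x.val) ?_ ?_ ?_ ?_ ?_
  · intro l _; exact Finset.mem_univ _
  · intro x _; exact Finset.mem_range.mpr (ZMod.val_lt x)
  · intro l hl; exact ZMod.val_cast_of_lt (Finset.mem_range.mp hl)
  · intro x _; simp [ZMod.natCast_val, ZMod.cast_id]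
  · intro l _; rfl

lemma solve (p : ℕ) [NeZero p] (hp : p.Prime) (hodd : Odd p) (k : ZMod p) (hk : k ≠ 0)
    (d : ZMod p → ZMod 2) :
    ∃ g : ZMod p → ZMod 2, ∀ i, g i + g (i + k) = d i + ∑ j, d j := by
  haveI := Fact.mk hp
  set c : ZMod 2 := ∑ j, d j with hc
  have hk' : (k⁻¹ : ZMod p) * k = 1 := inv_mul_cancel₀ hk
  refine ⟨fun i => ∑ l ∈ Finset.range (i * k⁻¹).val, (d ((l : ZMod p) * k) + c), fun i => ?_⟩
  beta_reduce
  set j := (i * k⁻¹).val with hj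
  have hjp : j < p := ZMod.val_lt _
  have hi : ((j : ZMod p)) * k = i := by
    rw [hj, ZMod.natCast_val, ZMod.cast_id, mul_assoc, hk', mul_one]
  have hkey : ∀ x y w : ZMod 2, x + (x + (y + w)) = y + w := by decide
  by_cases hcase : j + 1 < p
  · have h2 : ((i + k) * k⁻¹).val = j + 1 := by
      have : (i + k) * k⁻¹ = ((j + 1 : ℕ) : ZMod p) := by
        push_cast
        rw [add_mul, mul_comm k, hk', hj, ZMod.natCast_val, ZMod.cast_id]
      rw [this, ZMod.val_cast_of_lt hcase]
    rw [h2, Finset.sum_range_succ, hi]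
    exact hkey _ (d i) c
  · have hj1 : j = p - 1 := by omega
    have hp1 : p - 1 + 1 = p := Nat.succ_pred_eq_of_pos hp.pos
    have h2 : ((i + k) * k⁻¹) = 0 := by
      have h3 : (i + k) * k⁻¹ = ((j : ZMod p)) + 1 := by
        rw [add_mul, mul_comm k, hk', hj, ZMod.natCast_val, ZMod.cast_id]
      have h4 : ((p - 1 : ℕ) : ZMod p) + 1 = ((p - 1 + 1 : ℕ) : ZMod p) := by push_cast; ring
      rw [h3, hj1, h4, hp1, ZMod.natCast_self]
    rw [h2]
    simp only [ZMod.val_zero, Finset.range_zero, Finset.sum_empty, add_zero]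
    have hsum : ∑ l ∈ Finset.range p, (d ((l : ZMod p) * k) + c) = 0 := by
      rw [Finset.sum_add_distrib, Finset.sum_const, Finset.card_range]
      have h3 : ∑ l ∈ Finset.range p, d ((l : ZMod p) * k) = c := by
        rw [sum_range_cast p (fun x => d (x * k)), hc]
        exact Fintype.sum_equiv (Equiv.mulRight₀ k hk) _ _ (fun x => rfl)
      have h4 : p • c = c := by
        rw [nsmul_eq_mul]
        have : ((p : ℕ) : ZMod 2) = 1 := by
          rw [← ZMod.natCast_mod, Nat.odd_iff.mp hodd, Nat.cast_one]
        rw [this, one_mul]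
      rw [h3, h4, CharTwo.add_self_eq_zero]
    have hr : Finset.range p = Finset.range (j + 1) := by rw [hj1, hp1]
    rw [hr, Finset.sum_range_succ, hi] at hsum
    have : ∀ x y w : ZMod 2, x + (y + w) = 0 → x = y + w := by decide
    exact this _ _ _ hsum

lemma const_central (p : ℕ) (c : ZMod 2) :
    (SemidirectProduct.inl (ofAdd fun _ => c) : Wreath p) ∈ Subgroup.center (Wreath p) := by
  rw [Subgroup.mem_center_iff]
  intro x
  have h1 : wreathShift p x.right (ofAdd fun _ => c) = ofAdd fun _ => c := rfl
  refine SemidirectProduct.ext ?_ ?_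
  · simp only [SemidirectProduct.mul_left, left_inl, right_inl, map_one, MulAut.one_apply, h1]
    exact mul_comm _ _
  · simp only [SemidirectProduct.mul_right, right_inl, mul_one, one_mul]

lemma mem_V_of (p : ℕ) (x : Wreath p) (hx : Multiplicative.toAdd x.right = 0) :
    QuotientGroup.mk x ∈ Vsub p := by
  have hx1 : x = SemidirectProduct.inl x.left := by
    refine SemidirectProduct.ext rfl ?_
    show x.right = 1
    rw [← ofAdd_toAdd x.right, hx, ofAdd_zero]
  refine Subgroup.mem_map.mpr ⟨SemidirectProduct.inl x.left,
    MonoidHom.mem_range.mpr ⟨x.left, rfl⟩, ?_⟩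
  rw [QuotientGroup.mk'_apply, ← hx1]

lemma key (p : ℕ) (hp : p.Prime) (hodd : Odd p) (x : Wreath p)
    (hx : Multiplicative.toAdd x.right ≠ 0) :
    ∃ α : MulAut (WreathQuot p), α (QuotientGroup.mk x) = cElem p := by
  haveI := Fact.mk hp
  haveI : NeZero p := ⟨hp.pos.ne'⟩
  set k := Multiplicative.toAdd x.right with hk
  have hab : (k⁻¹ : ZMod p) * k = 1 := inv_mul_cancel₀ hx
  set e := scaleEquiv p k⁻¹ k hab with he
  obtain ⟨g, hg⟩ := solve p hp hodd 1 one_ne_zero (fun i => x.left.toAdd (i * k))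
  set c : ZMod 2 := ∑ j, x.left.toAdd (j * k) with hc
  refine ⟨(quotAut p e).trans
    (MulAut.conj (QuotientGroup.mk (SemidirectProduct.inl (ofAdd g) : Wreath p))), ?_⟩
  rw [MulEquiv.trans_apply, quotAut_mk, MulAut.conj_apply,
    ← QuotientGroup.mk_inv, ← QuotientGroup.mk_mul, ← QuotientGroup.mk_mul]
  have hw : (SemidirectProduct.inl (ofAdd g) : Wreath p) * e x
        * (SemidirectProduct.inl (ofAdd g) : Wreath p)⁻¹
      = SemidirectProduct.inl (ofAdd fun _ => c)
        * SemidirectProduct.inr (ofAdd (1 : ZMod p)) := by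
    rw [← map_inv]
    refine SemidirectProduct.ext ?_ ?_
    · refine Multiplicative.toAdd.injective ?_
      funext i
      simp only [SemidirectProduct.mul_left, SemidirectProduct.mul_right, left_inl, right_inl,
        map_one, MulAut.one_apply, mul_one, one_mul]
      show g i + (e x).left.toAdd i + ((wreathShift p (e x).right) (ofAdd g)⁻¹).toAdd i
          = c + (1 : WreathBase p).toAdd i
      have h5 : (e x).left.toAdd i = x.left.toAdd (i * k) := rfl
      have h6 : ((wreathShift p (e x).right) (ofAdd g)⁻¹).toAdd i = -g (i + 1) := by
        show -g (i + k⁻¹ * k) = -g (i + 1)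
        rw [hab]
      have h7 : (1 : WreathBase p).toAdd i = 0 := rfl
      rw [h5, h6, h7, add_zero]
      have := hg i
      revert this
      generalize g i = a
      generalize g (i + 1) = b
      generalize x.left.toAdd (i * k) = d'
      generalize c = c'
      revert a b d' c'
      decide
    · simp only [SemidirectProduct.mul_left, SemidirectProduct.mul_right, left_inl, right_inl,
        map_one, mul_one, one_mul]
      show ofAdd ((k⁻¹ : ZMod p) * k) = ofAdd (1 : ZMod p)
      rw [hab]
  rw [hw, QuotientGroup.mk_mul]
  have h8 : (QuotientGroup.mk (SemidirectProduct.inl (ofAdd fun _ => c) : Wreath p)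
      : WreathQuot p) = 1 := (QuotientGroup.eq_one_iff _).mpr (const_central p c)
  rw [h8, one_mul]
  rfl

/-- For an odd prime `p`, the automorphism group of `G = W/Z(W)` (where
`W = C₂ ≀ C_p`) acts transitively on the complement `G \ V` of the image `V`
of the base group. -/
theorem aut_transitive_outside_V (p : ℕ) (hp : p.Prime) (hodd : Odd p)
    (g h : WreathQuot p) (hg : g ∉ Vsub p) (hh : h ∉ Vsub p) :
    ∃ α : MulAut (WreathQuot p), α g = h := by
  obtain ⟨x, rfl⟩ := QuotientGroup.mk_surjective g
  obtain ⟨y, rfl⟩ := QuotientGroup.mk_surjective h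
  have hx : Multiplicative.toAdd x.right ≠ 0 := fun h0 => hg (mem_V_of p x h0)
  have hy : Multiplicative.toAdd y.right ≠ 0 := fun h0 => hh (mem_V_of p y h0)
  obtain ⟨α, hα⟩ := key p hp hodd x hx
  obtain ⟨β, hβ⟩ := key p hp hodd y hy
  exact ⟨α.trans β.symm, by rw [MulEquiv.trans_apply, hα, ← hβ, MulEquiv.symm_apply_apply]⟩
end

section
/- Let G be a finite group containing an abelian normal subgroup V and an element c, let w ∈ V, and let f ∈ 𝔽₂[x] have degree d−1 (d ≥ 1). Writing the action of c on V by conjugation additively, the element w^{f(c)} can be expressed as a word of length at most 3d in c and w (with inverses allowed), using w at most d times. -/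
private lemma conjpow {G : Type*} [Group G] (x y : G) (n : ℕ) :
    (x * y * x⁻¹) ^ n = x * y ^ n * x⁻¹ := by
  induction n with
  | zero => simp
  | succ n ih => rw [pow_succ, pow_succ, ih]; group

private lemma pow_two_cases {G : Type*} [Group G] {w : G} (hw : w * w = 1) :
    ∀ k, w ^ k = 1 ∨ w ^ k = w := by
  intro k
  induction k using Nat.strong_induction_on with
  | _ k ih =>
    match k with
    | 0 => exact Or.inl (pow_zero w)
    | 1 => exact Or.inr (pow_one w)
    | (k+2) =>
      have h2 : w ^ (k+2) = w ^ k := by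
        rw [pow_add, pow_two, hw, mul_one]
      rw [h2]
      exact ih k (by omega)

private lemma prod_pows {G : Type*} [Group G] {w : G} (hw : w * w = 1) :
    ∀ L : List ℕ, ((L.map (w ^ ·)).prod = 1 ∨ (L.map (w ^ ·)).prod = w) := by
  intro L
  induction L with
  | nil => left; simp
  | cons a L ih =>
    simp only [List.map_cons, List.prod_cons]
    rcases pow_two_cases hw a with h | h <;> rcases ih with h' | h' <;>
      simp [h, h', hw]

private lemma horner_aux {G : Type*} [Group G] [DecidableEq G] (c w : G)
    (hc1 : c ≠ w) (hc2 : c ≠ w⁻¹) :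
    ∀ (n : ℕ) (e : ℕ → ZMod 2), ∃ l : List G,
      (∀ x ∈ l, x = c ∨ x = c⁻¹ ∨ x = w ∨ x = w⁻¹) ∧
      l.length ≤ 3 * n ∧
      l.countP (fun x => x = w || x = w⁻¹) ≤ n ∧
      l.prod = ((List.range n).map (fun i => (c ^ i * w * c⁻¹ ^ i) ^ (e i).val)).prod := by
  have hc3 : c⁻¹ ≠ w := fun h => hc2 (by rw [← h]; simp)
  have hc4 : c⁻¹ ≠ w⁻¹ := fun h => hc1 (by rwa [inv_inj] at h)
  intro n
  induction n with
  | zero => intro e; exact ⟨[], by simp, by simp, by simp, by simp⟩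
  | succ n ih =>
    intro e
    obtain ⟨l, hmem, hlen, hcnt, hprod⟩ := ih (fun i => e (i+1))
    have hkey : ((List.range (n+1)).map (fun i => (c ^ i * w * c⁻¹ ^ i) ^ (e i).val)).prod
        = w ^ (e 0).val * (c * l.prod * c⁻¹) := by
      rw [hprod, List.range_succ_eq_map, List.map_cons, List.prod_cons, List.map_map]
      congr 1
      · simp
      · calc ((List.range n).map ((fun i => (c ^ i * w * c⁻¹ ^ i) ^ (e i).val) ∘ Nat.succ)).prod
            = ((List.range n).map (fun i =>
                (MulAut.conj c) ((c ^ i * w * c⁻¹ ^ i) ^ (e (i+1)).val))).prod := by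
              refine congrArg List.prod (List.map_congr_left fun i _ => ?_)
              simp only [Function.comp, MulAut.conj_apply]
              rw [← conjpow]
              show (c ^ (i+1) * w * c⁻¹ ^ (i+1)) ^ (e (i+1)).val = _
              congr 1
              rw [pow_succ', pow_succ]
              group
          _ = ((List.map (fun i => (c ^ i * w * c⁻¹ ^ i) ^ (e (i+1)).val)
                (List.range n)).map (MulAut.conj c)).prod := by rw [List.map_map]; rfl
          _ = (MulAut.conj c) ((List.range n).map
                (fun i => (c ^ i * w * c⁻¹ ^ i) ^ (e (i+1)).val)).prod :=
              (map_list_prod (MulAut.conj c) _).symm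
          _ = c * ((List.range n).map
                (fun i => (c ^ i * w * c⁻¹ ^ i) ^ (e (i+1)).val)).prod * c⁻¹ := by
              simp [MulAut.conj_apply]
    have hv : (e 0).val = 0 ∨ (e 0).val = 1 := by
      have := ZMod.val_lt (e 0); omega
    rcases hv with hv | hv
    · refine ⟨c :: (l ++ [c⁻¹]), ?_, ?_, ?_, ?_⟩
      · intro x hx
        simp at hx
        rcases hx with h | h | h
        · exact Or.inl h
        · exact hmem x h
        · exact Or.inr (Or.inl h)
      · simp
        omega
      · simp only [List.countP_cons, List.countP_append]
        simp [hc1, hc2, hc3, hc4]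
        omega
      · rw [hkey, hv, pow_zero, one_mul]
        simp [mul_assoc]
    · refine ⟨w :: c :: (l ++ [c⁻¹]), ?_, ?_, ?_, ?_⟩
      · intro x hx
        simp at hx
        rcases hx with h | h | h | h
        · exact Or.inr (Or.inr (Or.inl h))
        · exact Or.inl h
        · exact hmem x h
        · exact Or.inr (Or.inl h)
      · simp
        omega
      · simp only [List.countP_cons, List.countP_append]
        simp [hc1, hc2, hc3, hc4]
        omega
      · rw [hkey, hv, pow_one]
        simp [mul_assoc]


/-- Horner-scheme word bound: let `V` be an elementary abelian normal `2`-subgroup of a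
finite group `G`, let `c ∈ G` act on `V` by conjugation, let `w ∈ V` and let
`f ∈ 𝔽₂[x]` have degree `d - 1` with `d ≥ 1`. Then `w^{f(c)}` (the image of `w`
under `f` evaluated at conjugation by `c`) is a word of length at most `3d` in
`c` and `w` (inverses allowed), in which `w` occurs at most `d` times. -/
theorem horner_word_bound (G : Type*) [Group G] [Fintype G] [DecidableEq G]
    (V : Subgroup G) [V.Normal]
    (hV2 : ∀ v ∈ V, v * v = 1) (hVab : ∀ v ∈ V, ∀ u ∈ V, v * u = u * v)
    (c : G) (w : G) (hw : w ∈ V)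
    (d : ℕ) (hd : 1 ≤ d) (f : Polynomial (ZMod 2)) (hf : f.natDegree = d - 1) :
    ∃ l : List G,
      (∀ x ∈ l, x = c ∨ x = c⁻¹ ∨ x = w ∨ x = w⁻¹) ∧
      l.length ≤ 3 * d ∧
      l.countP (fun x => x = w || x = w⁻¹) ≤ d ∧
      l.prod =
        ((List.range d).map (fun i => (c ^ i * w * c⁻¹ ^ i) ^ (f.coeff i).val)).prod := by
  have hww : w * w = 1 := hV2 w hw
  have hinv : w⁻¹ = w := inv_eq_of_mul_eq_one_right hww
  by_cases hc : c = w ∨ c = w⁻¹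
  · have hcw : c = w := by rcases hc with h | h; exact h; rwa [hinv] at h
    subst hcw
    have hP : ((List.range d).map (fun i => (c ^ i * c * c⁻¹ ^ i) ^ (f.coeff i).val)).prod
        = (((List.range d).map (fun i => (i + 1 + i) * (f.coeff i).val)).map (c ^ ·)).prod := by
      rw [List.map_map]
      refine congrArg List.prod (List.map_congr_left fun i _ => ?_)
      simp only [Function.comp, hinv, ← pow_succ, ← pow_add, ← pow_mul]
    rcases prod_pows hww ((List.range d).map (fun i => (i + 1 + i) * (f.coeff i).val)) with h | h
    · refine ⟨[], by simp, by simp, by simp, ?_⟩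
      rw [hP, h]
      simp
    · refine ⟨[c], ?_, by simp; omega, ?_, ?_⟩
      · intro x hx; simp at hx; exact Or.inl hx
      · simp
        omega
      · rw [hP, h]
        simp
  · push_neg at hc
    exact horner_aux c w hc.1 hc.2 d (fun i => f.coeff i)
end
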